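/- arXiv:2104.10103 — 3 statements merged into one kernel-verified Lean document; each statement's English description precedes it below -/
import Mathlib

section
/- Let k : [0,∞) → ℝ be convex, differentiable, and strictly decreasing with −∞ < k′(x) < 0 for all x ≥ 0. Let wᵢ > 0 be fixed positive numbers, Xᵢ ∈ ℝ^d, and define F(z) = Σᵢ wᵢ k(‖z − Xᵢ‖²). Define the iteration z_{j+1} = (Σᵢ wᵢ g(‖z_j − Xᵢ‖²) Xᵢ)/(Σᵢ wᵢ g(‖z_j − Xᵢ‖²)) with g = −k′. Then F(z_{j+1}) − F(z_j) ≥ ‖z_{j+1} − z_j‖² · Σᵢ wᵢ g(‖z_j − Xᵢ‖²) ≥ 0, so F(z_j) is nondecreasing in j. -/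
open scoped BigOperators

/-- Tangent line inequality for a convex differentiable function on `Ici 0`. -/
lemma tangent_le {k : ℝ → ℝ} (hconv : ConvexOn ℝ (Set.Ici (0 : ℝ)) k)
    (hdiff : ∀ x ∈ Set.Ici (0 : ℝ), DifferentiableAt ℝ k x)
    {x y : ℝ} (hx : x ∈ Set.Ici (0 : ℝ)) (hy : y ∈ Set.Ici (0 : ℝ)) :
    k x + deriv k x * (y - x) ≤ k y := by
  rcases lt_trichotomy x y with h | h | h
  · have := hconv.deriv_le_slope hx hy h (hdiff x hx)
    rw [slope_def_field, le_div_iff₀ (by linarith : (0:ℝ) < y - x)] at this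
    linarith
  · simp [h]
  · have := hconv.slope_le_deriv hy hx h (hdiff x hx)
    rw [slope_def_field, div_le_iff₀ (by linarith : (0:ℝ) < x - y)] at this
    nlinarith

/-- Ascent property of the regression mean shift iteration: with `g = -k'`,
`F z = ∑ i, w i * k ‖z - X i‖²`, and `z (j+1)` the `g`-weighted mean of the `X i` at `z j`,
`F (z (j+1)) - F (z j) ≥ ‖z (j+1) - z j‖² * ∑ i, w i * g ‖z j - X i‖² ≥ 0`,
so `F ∘ z` is nondecreasing. -/
theorem stmt2 (d n : ℕ) (hn : 0 < n) (k : ℝ → ℝ)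
    (hconv : ConvexOn ℝ (Set.Ici (0 : ℝ)) k)
    (hdiff : ∀ x ∈ Set.Ici (0 : ℝ), DifferentiableAt ℝ k x)
    (hk' : ∀ x ∈ Set.Ici (0 : ℝ), deriv k x < 0)
    (w : Fin n → ℝ) (hw : ∀ i, 0 < w i)
    (X : Fin n → EuclideanSpace ℝ (Fin d))
    (g : ℝ → ℝ) (hg : ∀ x, g x = -(deriv k x))
    (F : EuclideanSpace ℝ (Fin d) → ℝ)
    (hF : ∀ z, F z = ∑ i, w i * k (‖z - X i‖ ^ 2))
    (z : ℕ → EuclideanSpace ℝ (Fin d))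
    (hiter : ∀ j, z (j + 1) =
      (∑ i, w i * g (‖z j - X i‖ ^ 2))⁻¹ • ∑ i, (w i * g (‖z j - X i‖ ^ 2)) • X i) :
    (∀ j, F (z (j + 1)) - F (z j) ≥
        ‖z (j + 1) - z j‖ ^ 2 * ∑ i, w i * g (‖z j - X i‖ ^ 2) ∧
      (0 : ℝ) ≤ ‖z (j + 1) - z j‖ ^ 2 * ∑ i, w i * g (‖z j - X i‖ ^ 2)) ∧
    Monotone (fun j => F (z j)) := by
  have key : ∀ j, F (z (j + 1)) - F (z j) ≥
      ‖z (j + 1) - z j‖ ^ 2 * ∑ i, w i * g (‖z j - X i‖ ^ 2) ∧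
      (0 : ℝ) ≤ ‖z (j + 1) - z j‖ ^ 2 * ∑ i, w i * g (‖z j - X i‖ ^ 2) := by
    intro j
    set a : Fin n → ℝ := fun i => ‖z j - X i‖ ^ 2 with ha
    set b : Fin n → ℝ := fun i => ‖z (j + 1) - X i‖ ^ 2 with hb
    have hamem : ∀ i, a i ∈ Set.Ici (0 : ℝ) := fun i => Set.mem_Ici.mpr (sq_nonneg _)
    have hbmem : ∀ i, b i ∈ Set.Ici (0 : ℝ) := fun i => Set.mem_Ici.mpr (sq_nonneg _)
    have hgpos : ∀ i, 0 < g (a i) := fun i => by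
      rw [hg]; linarith [hk' (a i) (hamem i)]
    have hSpos : 0 < ∑ i, w i * g (a i) :=
      Finset.sum_pos (fun i _ => mul_pos (hw i) (hgpos i)) (by simp [Finset.univ_nonempty_iff, Fin.pos_iff_nonempty.mp hn])
    set S : ℝ := ∑ i, w i * g (a i) with hS
    -- weighted mean identity: S • z (j+1) = ∑ (w i * g (a i)) • X i
    have hmean : S • z (j + 1) = ∑ i, (w i * g (a i)) • X i := by
      rw [hiter j, smul_smul, mul_inv_cancel₀ (ne_of_gt hSpos), one_smul]
    -- tangent inequality summed
    have hterm : ∀ i, w i * k (b i) - w i * k (a i) ≥ w i * (deriv k (a i) * (b i - a i)) := by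
      intro i
      have := tangent_le hconv hdiff (hamem i) (hbmem i)
      nlinarith [hw i]
    have hsum : F (z (j+1)) - F (z j) ≥ ∑ i, w i * (deriv k (a i) * (b i - a i)) := by
      rw [hF, hF, ← Finset.sum_sub_distrib]
      exact Finset.sum_le_sum (fun i _ => hterm i)
    -- ∑ w i * deriv k (a i) * (b i - a i) = -∑ w i * g(a i) * (b i - a i) = S * ‖Δ‖²
    have hexp : ∀ i, b i - a i = ‖z (j+1)‖^2 - ‖z j‖^2
        - 2 * (inner ℝ (z (j+1) - z j) (X i) : ℝ) := by
      intro i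
      simp only [ha, hb]
      rw [norm_sub_sq_real (z (j+1)) (X i), norm_sub_sq_real (z j) (X i), inner_sub_left]
      ring
    have hsum2 : ∑ i, w i * (g (a i) * (b i - a i)) = -(S * ‖z (j+1) - z j‖ ^ 2) := by
      have : ∑ i, w i * (g (a i) * (b i - a i))
          = S * (‖z (j+1)‖^2 - ‖z j‖^2) - 2 * (inner ℝ (z (j+1) - z j) (S • z (j+1)) : ℝ) := by
        rw [hmean, inner_sum]
        rw [hS, Finset.sum_mul, Finset.mul_sum, ← Finset.sum_sub_distrib]
        apply Finset.sum_congr rfl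
        intro i _
        rw [hexp i, real_inner_smul_right]
        ring
      rw [this, real_inner_smul_right, inner_sub_left, norm_sub_sq_real,
        real_inner_self_eq_norm_sq, real_inner_comm (z j) (z (j+1))]
      ring
    have hderivg : ∀ i, deriv k (a i) = -(g (a i)) := fun i => by rw [hg]; ring
    have hfinal : ∑ i, w i * (deriv k (a i) * (b i - a i)) = S * ‖z (j+1) - z j‖ ^ 2 := by
      have : ∑ i, w i * (deriv k (a i) * (b i - a i))
          = -∑ i, w i * (g (a i) * (b i - a i)) := by
        rw [← Finset.sum_neg_distrib]
        exact Finset.sum_congr rfl fun i _ => by rw [hderivg i]; ring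
      rw [this, hsum2]; ring
    constructor
    · rw [ge_iff_le, mul_comm]
      calc S * ‖z (j+1) - z j‖ ^ 2 = ∑ i, w i * (deriv k (a i) * (b i - a i)) := hfinal.symm
        _ ≤ F (z (j+1)) - F (z j) := hsum
    · exact mul_nonneg (sq_nonneg _) (le_of_lt hSpos)
  refine ⟨key, monotone_nat_of_le_succ fun j => ?_⟩
  obtain ⟨h1, h2⟩ := key j
  show F (z j) ≤ F (z (j+1))
  linarith
end

section
/- Under the assumptions of the previous statement, if additionally F is bounded above on the convex hull C of {X₁,…,Xₙ} and inf_{z∈C} Σᵢ wᵢ g(‖z − Xᵢ‖²) = c₀ > 0, then the sequence F(z_j) converges and ‖z_{j+1} − z_j‖ → 0 as j → ∞. -/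
open scoped BigOperators

lemma grad_ineq {f : ℝ → ℝ} (hconv : ConvexOn ℝ (Set.Ici (0:ℝ)) f)
    {x y : ℝ} (hx : x ∈ Set.Ici (0:ℝ)) (hy : y ∈ Set.Ici (0:ℝ))
    (hd : DifferentiableAt ℝ f x) :
    f x + deriv f x * (y - x) ≤ f y := by
  rcases lt_trichotomy x y with h | h | h
  · have := hconv.deriv_le_slope hx hy h hd
    rw [slope_def_field, le_div_iff₀ (by linarith)] at this
    linarith [this]
  · simp [h]
  · have := hconv.slope_le_deriv hy hx h hd
    rw [slope_def_field, div_le_iff₀ (by linarith)] at this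
    nlinarith [this]

/-- Under the mean-shift ascent setup, if `F` is bounded above on the convex hull `C` of the
`X i` and `inf_{z ∈ C} ∑ i, w i * g ‖z - X i‖² = c₀ > 0`, then `F (z j)` converges and
`‖z (j+1) - z j‖ → 0`. -/
theorem stmt3 (d n : ℕ) (hn : 0 < n) (k : ℝ → ℝ)
    (hconv : ConvexOn ℝ (Set.Ici (0 : ℝ)) k)
    (hdiff : ∀ x ∈ Set.Ici (0 : ℝ), DifferentiableAt ℝ k x)
    (hk' : ∀ x ∈ Set.Ici (0 : ℝ), deriv k x < 0)
    (w : Fin n → ℝ) (hw : ∀ i, 0 < w i)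
    (X : Fin n → EuclideanSpace ℝ (Fin d))
    (g : ℝ → ℝ) (hg : ∀ x, g x = -(deriv k x))
    (F : EuclideanSpace ℝ (Fin d) → ℝ)
    (hF : ∀ z, F z = ∑ i, w i * k (‖z - X i‖ ^ 2))
    (z : ℕ → EuclideanSpace ℝ (Fin d))
    (hz0 : z 0 ∈ convexHull ℝ (Set.range X))
    (hiter : ∀ j, z (j + 1) =
      (∑ i, w i * g (‖z j - X i‖ ^ 2))⁻¹ • ∑ i, (w i * g (‖z j - X i‖ ^ 2)) • X i)
    (M : ℝ) (hbdd : ∀ y ∈ convexHull ℝ (Set.range X), F y ≤ M)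
    (c₀ : ℝ) (hc₀ : 0 < c₀)
    (hinf : ∀ y ∈ convexHull ℝ (Set.range X), c₀ ≤ ∑ i, w i * g (‖y - X i‖ ^ 2)) :
    (∃ L : ℝ, Filter.Tendsto (fun j => F (z j)) Filter.atTop (nhds L)) ∧
    Filter.Tendsto (fun j => ‖z (j + 1) - z j‖) Filter.atTop (nhds 0) := by
  have hgpos : ∀ t : ℝ, 0 ≤ t → 0 < g t := fun t ht => by
    rw [hg]; linarith [hk' t ht]
  -- all iterates are in the convex hull
  have hmem : ∀ j, z j ∈ convexHull ℝ (Set.range X) := by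
    intro j
    induction j with
    | zero => exact hz0
    | succ j ih =>
      rw [hiter j]
      have h1 : ∀ i ∈ Finset.univ, 0 ≤ w i * g (‖z j - X i‖ ^ 2) := fun i _ =>
        le_of_lt (mul_pos (hw i) (hgpos _ (sq_nonneg _)))
      have h2 : 0 < ∑ i, w i * g (‖z j - X i‖ ^ 2) := lt_of_lt_of_le hc₀ (hinf _ ih)
      exact Finset.centerMass_mem_convexHull Finset.univ h1 h2
        (fun i _ => Set.mem_range_self i)
  -- ascent inequality
  have ascent : ∀ j, F (z j) + c₀ * ‖z (j+1) - z j‖ ^ 2 ≤ F (z (j+1)) := by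
    intro j
    set a : Fin n → ℝ := fun i => w i * g (‖z j - X i‖ ^ 2) with ha
    set S : ℝ := ∑ i, a i with hSdef
    have hS : c₀ ≤ S := hinf _ (hmem j)
    have hSpos : 0 < S := lt_of_lt_of_le hc₀ hS
    have hzS : S • z (j+1) = ∑ i, a i • X i := by
      rw [hiter j, smul_smul, mul_inv_cancel₀ (ne_of_gt hSpos), one_smul]
    set v : EuclideanSpace ℝ (Fin d) := z (j+1) - z j with hv
    -- per-index convexity inequality
    have hkey : ∀ i, k (‖z j - X i‖ ^ 2) + deriv k (‖z j - X i‖ ^ 2) *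
        (‖z (j+1) - X i‖ ^ 2 - ‖z j - X i‖ ^ 2) ≤ k (‖z (j+1) - X i‖ ^ 2) :=
      fun i => grad_ineq hconv (Set.mem_Ici.mpr (sq_nonneg _)) (Set.mem_Ici.mpr (sq_nonneg _)) (hdiff _ (Set.mem_Ici.mpr (sq_nonneg _)))
    -- compute the weighted sum of the linear terms
    have hdiffnorm : ∀ i, ‖z (j+1) - X i‖ ^ 2 - ‖z j - X i‖ ^ 2 =
        (‖z (j+1)‖ ^ 2 - ‖z j‖ ^ 2) - 2 * (inner ℝ v (X i) : ℝ) := by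
      intro i
      rw [hv, inner_sub_left]
      rw [@norm_sub_sq_real _ _ _ (z (j+1)) (X i), @norm_sub_sq_real _ _ _ (z j) (X i)]
      ring
    have hsum : ∑ i, a i * (‖z (j+1) - X i‖ ^ 2 - ‖z j - X i‖ ^ 2) = -(S * ‖v‖ ^ 2) := by
      have e1 : ∑ i, a i * (‖z (j+1) - X i‖ ^ 2 - ‖z j - X i‖ ^ 2) =
          S * (‖z (j+1)‖ ^ 2 - ‖z j‖ ^ 2) - 2 * (inner ℝ v (∑ i, a i • X i) : ℝ) := by
        rw [inner_sum]
        simp only [real_inner_smul_right]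
        rw [hSdef, Finset.sum_mul, Finset.mul_sum, ← Finset.sum_sub_distrib]
        apply Finset.sum_congr rfl
        intro i _
        rw [hdiffnorm i]; ring
      rw [e1, ← hzS, real_inner_smul_right]
      have e2 : (inner ℝ v (z (j+1)) : ℝ) = ‖z (j+1)‖ ^ 2 - inner ℝ (z j) (z (j+1)) := by
        rw [hv, inner_sub_left, real_inner_self_eq_norm_sq]
      have e3 : ‖v‖ ^ 2 = ‖z (j+1)‖ ^ 2 - 2 * (inner ℝ (z j) (z (j+1)) : ℝ) + ‖z j‖ ^ 2 := by
        rw [hv, @norm_sub_sq_real _ _ _ (z (j+1)) (z j), real_inner_comm]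
        try ring
      rw [e2, e3]
      ring
    -- combine
    have hFsum : F (z (j+1)) - F (z j) = ∑ i, w i *
        (k (‖z (j+1) - X i‖ ^ 2) - k (‖z j - X i‖ ^ 2)) := by
      rw [hF, hF, ← Finset.sum_sub_distrib]
      apply Finset.sum_congr rfl; intro i _; ring
    have hlow : S * ‖v‖ ^ 2 ≤ F (z (j+1)) - F (z j) := by
      rw [hFsum]
      have : ∀ i ∈ Finset.univ, -(a i * (‖z (j+1) - X i‖ ^ 2 - ‖z j - X i‖ ^ 2)) ≤
          w i * (k (‖z (j+1) - X i‖ ^ 2) - k (‖z j - X i‖ ^ 2)) := by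
        intro i _
        have h := hkey i
        have hwp := (hw i).le
        have : a i = w i * -(deriv k (‖z j - X i‖ ^ 2)) := by rw [ha]; simp [hg]
        rw [this]
        nlinarith [hkey i, hw i]
      calc S * ‖v‖ ^ 2 = ∑ i, -(a i * (‖z (j+1) - X i‖ ^ 2 - ‖z j - X i‖ ^ 2)) := by
            rw [Finset.sum_neg_distrib, hsum]; ring
        _ ≤ _ := Finset.sum_le_sum this
    nlinarith [sq_nonneg ‖v‖, hlow, hS]
  -- monotone and bounded, hence convergent
  have hmono : Monotone (fun j => F (z j)) := by
    apply monotone_nat_of_le_succ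
    intro j
    have := ascent j
    nlinarith [sq_nonneg ‖z (j+1) - z j‖]
  have hbd : BddAbove (Set.range fun j => F (z j)) := by
    refine ⟨M, ?_⟩
    rintro x ⟨j, rfl⟩
    exact hbdd _ (hmem j)
  have hL : Filter.Tendsto (fun j => F (z j)) Filter.atTop (nhds (⨆ j, F (z j))) :=
    tendsto_atTop_ciSup hmono hbd
  refine ⟨⟨_, hL⟩, ?_⟩
  -- differences tend to 0
  have h1 : Filter.Tendsto (fun j => F (z (j+1)) - F (z j)) Filter.atTop (nhds 0) := by
    have := ((hL.comp (Filter.tendsto_add_atTop_nat 1)).sub hL)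
    simpa using this
  have h2 : Filter.Tendsto (fun j => ‖z (j+1) - z j‖ ^ 2) Filter.atTop (nhds 0) := by
    have hsq : Filter.Tendsto (fun j => c₀ * ‖z (j+1) - z j‖ ^ 2) Filter.atTop (nhds 0) := by
      refine squeeze_zero (fun j => by positivity) (fun j => ?_) h1
      linarith [ascent j]
    have := hsq.const_mul c₀⁻¹
    simpa [inv_mul_cancel_left₀ (ne_of_gt hc₀), mul_assoc,
      inv_mul_cancel₀ (ne_of_gt hc₀)] using this
  have := h2.sqrt
  simp only [Real.sqrt_zero] at this
  refine this.congr fun j => ?_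
  rw [Real.sqrt_sq (norm_nonneg _)]
end

section
/- Let p, p̃ be twice differentiable on a neighborhood of x ∈ ℝ^d with ∇p(x) = 0, and let x̃ be a point with ∇p̃(x̃) = 0 and ‖x̃ − x‖ ≤ κ. Suppose all eigenvalues of ∇²p(x) are ≤ −λ* < 0, the third derivatives of p̃ are bounded so that ∇p̃(x̃) − ∇p̃(x) = [∇²p(x) + Δ](x̃ − x) with ‖Δ‖_op ≤ λ*/2. Then ‖x̃ − x‖ ≤ (2/λ*) ‖∇p̃(x) − ∇p(x)‖. -/
open scoped RealInnerProductSpace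

/-- Displacement bound for a perturbed mode: if `∇p(x) = 0`, `∇p̃(x̃) = 0`, `‖x̃ - x‖ ≤ κ`,
the Hessian `H = ∇²p(x)` satisfies `⟪v, H v⟫ ≤ -λ*‖v‖²` (all eigenvalues `≤ -λ* < 0`),
and `∇p̃(x̃) - ∇p̃(x) = (H + Δ)(x̃ - x)` with `‖Δ‖ ≤ λ*/2`, then
`‖x̃ - x‖ ≤ (2/λ*) ‖∇p̃(x) - ∇p(x)‖`. -/
theorem stmt13 (d : ℕ) (p pt : EuclideanSpace ℝ (Fin d) → ℝ)
    (x xt : EuclideanSpace ℝ (Fin d)) (κ lams : ℝ) (hlams : 0 < lams)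
    (hκ : ‖xt - x‖ ≤ κ)
    (hcritp : gradient p x = 0) (hcritpt : gradient pt xt = 0)
    (H Δ : EuclideanSpace ℝ (Fin d) →L[ℝ] EuclideanSpace ℝ (Fin d))
    (hH : ∀ v, ⟪v, H v⟫ ≤ -lams * ‖v‖ ^ 2)
    (hΔ : ‖Δ‖ ≤ lams / 2)
    (heq : gradient pt xt - gradient pt x = H (xt - x) + Δ (xt - x)) :
    ‖xt - x‖ ≤ (2 / lams) * ‖gradient pt x - gradient p x‖ := by
  set v := xt - x with hv
  -- ‖H v‖ ≥ lams * ‖v‖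
  have hHv : lams * ‖v‖ ≤ ‖H v‖ := by
    rcases eq_or_ne v 0 with h0 | h0
    · simp [h0]
    · have hnorm : 0 < ‖v‖ := norm_pos_iff.mpr h0
      have h1 : lams * ‖v‖ ^ 2 ≤ -⟪v, H v⟫ := by linarith [hH v]
      have h2 : -⟪v, H v⟫ ≤ ‖v‖ * ‖H v‖ := by
        have := abs_real_inner_le_norm v (H v)
        have := neg_abs_le (⟪v, H v⟫)
        linarith
      have h3 : lams * ‖v‖ ^ 2 ≤ ‖v‖ * ‖H v‖ := le_trans h1 h2
      nlinarith
  have hΔv : ‖Δ v‖ ≤ (lams / 2) * ‖v‖ := by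
    calc ‖Δ v‖ ≤ ‖Δ‖ * ‖v‖ := Δ.le_opNorm v
    _ ≤ (lams / 2) * ‖v‖ := by
        exact mul_le_mul_of_nonneg_right hΔ (norm_nonneg v)
  have hg : gradient pt x - gradient p x = -(H v + Δ v) := by
    rw [hcritp, hcritpt] at *
    rw [sub_zero]
    have : (0 : EuclideanSpace ℝ (Fin d)) - gradient pt x = H v + Δ v := heq
    linear_combination (norm := module) -this
  have hnorm : (lams / 2) * ‖v‖ ≤ ‖gradient pt x - gradient p x‖ := by
    rw [hg, norm_neg]
    have h4 : ‖H v‖ ≤ ‖H v + Δ v‖ + ‖Δ v‖ := by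
      simpa using norm_sub_le (H v + Δ v) (Δ v)
    linarith
  rw [div_mul_eq_mul_div, le_div_iff₀ hlams]
  nlinarith
end
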